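/- Let E be a group, C a normal subgroup of E, and p : E → Q a surjective group homomorphism with kernel C, where Q is an infinite cyclic group (Q ≅ ℤ). Let α : Q → Aut(C) be a group homomorphism such that for every e ∈ E there exists c₀ ∈ C with e * c * e⁻¹ = c₀ * α(p(e))(c) * c₀⁻¹ for all c ∈ C. Then there exists a group isomorphism θ from the semidirect product C ⋊_α Q onto E satisfying θ(c, 1) = c for all c ∈ C and p(θ(c, q)) = q for all (c, q). -/

import Mathlib

/-- Let `p : E → Q` be a surjective group homomorphism with kernel `C`,
where `Q` is infinite cyclic (`Q ≃ ℤ`), and `α : Q → Aut(C)` a homomorphism lifting the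
outer action of the extension.  Then there is a group isomorphism `θ : C ⋊[α] Q ≃* E`
with `θ (c, 1) = c` for all `c ∈ C` and `p (θ (c, q)) = q` for all `(c, q)`. -/
theorem stmt16 {E Q : Type*} [Group E] [Group Q]
    (p : E →* Q) (hp : Function.Surjective p)
    (hQ : Nonempty (Q ≃* Multiplicative ℤ))
    (α : Q →* MulAut p.ker)
    (hα : ∀ e : E, ∃ c₀ : p.ker, ∀ c : p.ker,
      e * ↑c * e⁻¹ = ↑c₀ * ↑(α (p e) c) * (↑c₀)⁻¹) :
    ∃ θ : p.ker ⋊[α] Q ≃* E,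
      (∀ c : p.ker, θ ⟨c, 1⟩ = ↑c) ∧
      ∀ (c : p.ker) (q : Q), p (θ ⟨c, q⟩) = q := by
  obtain ⟨φ⟩ := hQ
  set g : Q := φ.symm (Multiplicative.ofAdd 1) with hg
  obtain ⟨e₁, he₁⟩ := hp g
  obtain ⟨c₀, hc₀⟩ := hα e₁
  set e₀ : E := (↑c₀)⁻¹ * e₁ with he₀
  have hpe₀ : p e₀ = g := by
    have : p (↑c₀ : E) = 1 := c₀.2
    simp [he₀, this, he₁]
  have hconj : ∀ c : p.ker, e₀ * ↑c * e₀⁻¹ = ↑(α g c) := by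
    intro c
    have := hc₀ c
    rw [he₁] at this
    rw [he₀]
    calc (↑c₀)⁻¹ * e₁ * ↑c * ((↑c₀)⁻¹ * e₁)⁻¹
        = (↑c₀)⁻¹ * (e₁ * ↑c * e₁⁻¹) * ↑c₀ := by group
      _ = (↑c₀)⁻¹ * (↑c₀ * ↑(α g c) * (↑c₀)⁻¹) * ↑c₀ := by rw [this]
      _ = ↑(α g c) := by group
  -- section s : Q →* E
  set s : Q →* E := (zpowersHom E e₀).comp φ.toMonoidHom with hs
  have hsq : ∀ q : Q, s q = e₀ ^ (Multiplicative.toAdd (φ q)) := fun q => rfl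
  have hgn : ∀ n : ℤ, g ^ n = φ.symm (Multiplicative.ofAdd n) := by
    intro n
    rw [hg, ← map_zpow]
    congr 1
    rw [← ofAdd_zsmul]
    simp
  have hps : ∀ q : Q, p (s q) = q := by
    intro q
    rw [hsq, map_zpow, hpe₀, hgn]
    simp
  have key : ∀ (n : ℤ) (c : p.ker), e₀ ^ n * ↑c * (e₀ ^ n)⁻¹ = ↑(α (g ^ n) c) := by
    intro n
    induction n using Int.induction_on with
    | zero => intro c; simp
    | succ k ih =>
      intro c
      have : e₀ ^ ((k : ℤ) + 1) = e₀ ^ (k : ℤ) * e₀ := by rw [zpow_add, zpow_one]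
      rw [this]
      calc e₀ ^ (k:ℤ) * e₀ * ↑c * (e₀ ^ (k:ℤ) * e₀)⁻¹
          = e₀ ^ (k:ℤ) * (e₀ * ↑c * e₀⁻¹) * (e₀ ^ (k:ℤ))⁻¹ := by group
        _ = e₀ ^ (k:ℤ) * ↑(α g c) * (e₀ ^ (k:ℤ))⁻¹ := by rw [hconj]
        _ = ↑(α (g ^ (k:ℤ)) (α g c)) := ih _
        _ = ↑(α (g ^ ((k:ℤ)+1)) c) := by rw [zpow_add, zpow_one, map_mul]; rfl
    | pred k ih =>
      intro c
      have hstep : e₀ ^ (-(k : ℤ) - 1) = e₀ ^ (-(k : ℤ)) * e₀⁻¹ := by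
        rw [zpow_sub, zpow_one]
      rw [hstep]
      have hinv : ∀ d : p.ker, e₀⁻¹ * ↑d * e₀ = ↑((α g)⁻¹ d) := by
        intro d
        have := hconj ((α g)⁻¹ d)
        simp only [MulAut.apply_inv_self] at this
        rw [← this]; group
      calc e₀ ^ (-(k:ℤ)) * e₀⁻¹ * ↑c * (e₀ ^ (-(k:ℤ)) * e₀⁻¹)⁻¹
          = e₀ ^ (-(k:ℤ)) * (e₀⁻¹ * ↑c * e₀) * (e₀ ^ (-(k:ℤ)))⁻¹ := by group
        _ = e₀ ^ (-(k:ℤ)) * ↑((α g)⁻¹ c) * (e₀ ^ (-(k:ℤ)))⁻¹ := by rw [hinv]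
        _ = ↑(α (g ^ (-(k:ℤ))) ((α g)⁻¹ c)) := ih _
        _ = ↑(α (g ^ (-(k:ℤ)-1)) c) := by
            rw [zpow_sub, zpow_one, map_mul, map_inv]; rfl
  have hsconj : ∀ (q : Q) (c : p.ker), s q * ↑c * (s q)⁻¹ = ↑(α q c) := by
    intro q c
    rw [hsq]
    have hq : g ^ (Multiplicative.toAdd (φ q)) = q := by rw [hgn]; simp
    rw [key, hq]
  -- build the hom
  have hcompat : ∀ q : Q, (p.ker.subtype).comp ((α q).toMonoidHom)
      = (MulAut.conj (s q)).toMonoidHom.comp p.ker.subtype := by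
    intro q
    ext c
    simp only [MonoidHom.comp_apply, MulEquiv.coe_toMonoidHom, Subgroup.coe_subtype,
      MulAut.conj_apply]
    rw [← hsconj]
  set θ₀ : p.ker ⋊[α] Q →* E := SemidirectProduct.lift p.ker.subtype s hcompat with hθ₀
  have hθval : ∀ x : p.ker ⋊[α] Q, θ₀ x = ↑x.1 * s x.2 := fun x => rfl
  have hinj : Function.Injective θ₀ := by
    rw [injective_iff_map_eq_one]
    intro x hx
    have hq : x.2 = 1 := by
      have := congrArg p hx
      rw [hθval] at this
      have h2 : p (↑x.1 : E) = 1 := x.1.2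
      simp [h2, hps] at this
      simpa using this
    have hc : (↑x.1 : E) = 1 := by
      rw [hθval, hq, map_one, mul_one] at hx
      exact hx
    ext
    · simpa using hc
    · simpa using hq
  have hsurj : Function.Surjective θ₀ := by
    intro e
    have hmem : e * (s (p e))⁻¹ ∈ p.ker := by
      rw [MonoidHom.mem_ker, map_mul, map_inv, hps, mul_inv_cancel]
    refine ⟨⟨⟨e * (s (p e))⁻¹, hmem⟩, p e⟩, ?_⟩
    rw [hθval]
    simp
  refine ⟨MulEquiv.ofBijective θ₀ ⟨hinj, hsurj⟩, ?_, ?_⟩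
  · intro c
    show θ₀ ⟨c, 1⟩ = ↑c
    rw [hθval]
    simp
  · intro c q
    show p (θ₀ ⟨c, q⟩) = q
    rw [hθval]
    have h2 : p (↑c : E) = 1 := c.2
    simp [h2, hps]
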